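/- Let I be an inner function on the unit disc with I(0) = 0, let 0 < λ < 1 and c > 0, and set f(z) := c·((1 + λI(z))/(1 − λI(z)))². Then f belongs to the Hardy space H¹, f(0) = c, and ‖f‖₁ = c·(1 + 3λ²)/(1 − λ²); equivalently, f(0)/‖f‖₁ = (1 − λ²)/(1 + 3λ²). -/

import Mathlib

open MeasureTheory Real Set

noncomputable section

/-- The backward shift operator: `Bf(z) = (f(z) - f(0))/z` for `z ≠ 0`, `Bf(0) = f'(0)`. -/
def bwdShift (f : ℂ → ℂ) : ℂ → ℂ :=
  fun z => if z = 0 then deriv f 0 else (f z - f 0) / z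

/-- The point `r·e^{iθ}`. -/
def circlePoint (r θ : ℝ) : ℂ := (r : ℂ) * Complex.exp ((θ : ℂ) * Complex.I)

/-- The integral mean `(1/2π)∫₀^{2π} |f(re^{iθ})| dθ`. -/
def hardyMean1 (f : ℂ → ℂ) (r : ℝ) : ℝ :=
  (2 * π)⁻¹ * ∫ θ in (0:ℝ)..(2 * π), ‖f (circlePoint r θ)‖

/-- Membership in the Hardy space `H¹` of the unit disc. -/
def MemHardy1 (f : ℂ → ℂ) : Prop :=
  DifferentiableOn ℂ f (Metric.ball (0:ℂ) 1) ∧ BddAbove (hardyMean1 f '' Set.Ioo 0 1)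

/-- The `H¹` norm: `sup_{0<r<1} (1/2π)∫₀^{2π} |f(re^{iθ})| dθ`. -/
def hardyNorm1 (f : ℂ → ℂ) : ℝ := sSup (hardyMean1 f '' Set.Ioo 0 1)

/-- `g` gives the radial boundary values of `f` for a.e. `θ ∈ (0, 2π]`. -/
def IsRadialLimit (f : ℂ → ℂ) (g : ℝ → ℂ) : Prop :=
  ∀ᵐ θ ∂(volume.restrict (Set.Ioc (0:ℝ) (2 * π))),
    Filter.Tendsto (fun r : ℝ => f (circlePoint r θ)) (nhdsWithin 1 (Set.Iio 1)) (nhds (g θ))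

/-- `I` is an inner function: bounded analytic on the disc with unimodular radial
boundary values almost everywhere. -/
def IsInnerFn (I : ℂ → ℂ) : Prop :=
  DifferentiableOn ℂ I (Metric.ball (0:ℂ) 1) ∧
  (∀ z ∈ Metric.ball (0:ℂ) 1, ‖I z‖ ≤ 1) ∧
  ∀ᵐ θ ∂(volume.restrict (Set.Ioc (0:ℝ) (2 * π))),
    ∃ w : ℂ, ‖w‖ = 1 ∧
      Filter.Tendsto (fun r : ℝ => I (circlePoint r θ)) (nhdsWithin 1 (Set.Iio 1)) (nhds w)

/-- The pointwise principal square root: `0` at `0`, and `√|w|·e^{i·Arg(w)/2}` otherwise. -/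
def psqrt (w : ℂ) : ℂ :=
  if w = 0 then 0
  else (Real.sqrt ‖w‖ : ℂ) * Complex.exp (((w.arg / 2 : ℝ) : ℂ) * Complex.I)

end

open Filter in

lemma aux_ne {lam : ℝ} (hl1 : lam < 1) (hl0 : 0 < lam) {v : ℂ} (hv : ‖v‖ ≤ 1) :
    (1:ℂ) - (lam:ℂ) * v ≠ 0 := by
  intro h
  have h2 : (lam:ℂ) * v = 1 := by linear_combination -h
  have := congrArg (‖·‖) h2
  simp only [norm_mul, Complex.norm_real, Real.norm_eq_abs, norm_one, abs_of_pos hl0] at this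
  nlinarith [norm_nonneg v]

lemma key_diff {lam c : ℝ} (hl0 : 0 < lam) (hl1 : lam < 1) (hc : 0 < c) {v : ℂ}
    (hv : ‖v‖ ≤ 1) :
    2*c*(1+lam^2)/(1-lam^2) * ((1 + (lam:ℂ) * v) / (1 - (lam:ℂ) * v)).re - c
      - ‖(c:ℂ) * ((1 + (lam:ℂ) * v) / (1 - (lam:ℂ) * v)) ^ 2‖
    = 4*c*lam^2*(1 - (v.re^2 + v.im^2)) /
        ((1-lam^2) * ((1 - lam*v.re)^2 + (lam*v.im)^2)) := by
  have hne := aux_ne hl1 hl0 hv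
  have hd : 0 < Complex.normSq (1 - (lam:ℂ) * v) := Complex.normSq_pos.2 hne
  have hs : v.re^2 + v.im^2 ≤ 1 := by
    have := Complex.sq_norm v
    nlinarith [norm_nonneg v, Complex.normSq_apply v]
  have habs : ‖(c:ℂ) * ((1 + (lam:ℂ) * v) / (1 - (lam:ℂ) * v)) ^ 2‖
      = c * (Complex.normSq (1 + (lam:ℂ)*v) / Complex.normSq (1 - (lam:ℂ)*v)) := by
    rw [norm_mul, norm_pow, norm_div, div_pow, Complex.sq_norm, Complex.sq_norm,
      Complex.norm_real, Real.norm_eq_abs, abs_of_pos hc]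
  have hdval : Complex.normSq (1 - (lam:ℂ)*v) = (1 - lam*v.re)^2 + (lam*v.im)^2 := by
    simp [Complex.normSq_apply]; ring
  have hnval : Complex.normSq (1 + (lam:ℂ)*v) = (1 + lam*v.re)^2 + (lam*v.im)^2 := by
    simp [Complex.normSq_apply]; ring
  have hd' : 0 < (1 - lam*v.re)^2 + (lam*v.im)^2 := hdval ▸ hd
  have hl2 : (0:ℝ) < 1 - lam^2 := by nlinarith
  rw [habs, Complex.div_re, hdval, hnval]
  have hre : ((1:ℂ) + (lam:ℂ)*v).re = 1 + lam*v.re := by simp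
  have him : ((1:ℂ) + (lam:ℂ)*v).im = lam*v.im := by simp
  have hre2 : ((1:ℂ) - (lam:ℂ)*v).re = 1 - lam*v.re := by simp
  have him2 : ((1:ℂ) - (lam:ℂ)*v).im = -(lam*v.im) := by simp
  rw [hre, him, hre2, him2]
  have hD0 : (1 - lam*v.re)^2 + lam^2*v.im^2 ≠ 0 := by rw [← mul_pow]; exact hd'.ne'
  field_simp
  ring

lemma key_ineq {lam c : ℝ} (hl0 : 0 < lam) (hl1 : lam < 1) (hc : 0 < c) {v : ℂ}
    (hv : ‖v‖ ≤ 1) :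
    ‖(c:ℂ) * ((1 + (lam:ℂ) * v) / (1 - (lam:ℂ) * v)) ^ 2‖
      ≤ 2*c*(1+lam^2)/(1-lam^2) * ((1 + (lam:ℂ) * v) / (1 - (lam:ℂ) * v)).re - c := by
  have hD := key_diff hl0 hl1 hc hv
  have hs : v.re^2 + v.im^2 ≤ 1 := by
    have := Complex.sq_norm v
    nlinarith [norm_nonneg v, Complex.normSq_apply v]
  have hd' : 0 < (1 - lam*v.re)^2 + (lam*v.im)^2 := by
    have := Complex.normSq_pos.2 (aux_ne hl1 hl0 hv)
    have hdval : Complex.normSq (1 - (lam:ℂ)*v) = (1 - lam*v.re)^2 + (lam*v.im)^2 := by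
      simp [Complex.normSq_apply]; ring
    linarith [hdval ▸ this]
  have hl2 : (0:ℝ) < 1 - lam^2 := by nlinarith
  have h0 : 0 ≤ 4*c*lam^2*(1 - (v.re^2 + v.im^2)) /
      ((1-lam^2) * ((1 - lam*v.re)^2 + (lam*v.im)^2)) := by
    apply div_nonneg _ (by positivity)
    have : 0 ≤ 1 - (v.re^2 + v.im^2) := by linarith
    positivity
  linarith

lemma key_eq {lam c : ℝ} (hl0 : 0 < lam) (hl1 : lam < 1) (hc : 0 < c) {v : ℂ}
    (hv : ‖v‖ = 1) :
    ‖(c:ℂ) * ((1 + (lam:ℂ) * v) / (1 - (lam:ℂ) * v)) ^ 2‖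
      = 2*c*(1+lam^2)/(1-lam^2) * ((1 + (lam:ℂ) * v) / (1 - (lam:ℂ) * v)).re - c := by
  have hD := key_diff hl0 hl1 hc hv.le
  have hs : v.re^2 + v.im^2 = 1 := by
    have := Complex.sq_norm v
    rw [hv] at this
    simp [Complex.normSq_apply] at this
    nlinarith
  rw [hs] at hD
  simp only [sub_self, mul_zero, zero_div] at hD
  linarith

lemma circle_mean {g : ℂ → ℂ} {r : ℝ} (hr0 : 0 < r) (hr1 : r < 1)
    (hg : DifferentiableOn ℂ g (Metric.ball 0 1)) :
    ∫ θ in (0:ℝ)..(2*π), g (circleMap 0 r θ) = 2 * (π:ℂ) * g 0 := by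
  have hd : DifferentiableOn ℂ g (Metric.closedBall 0 r) :=
    hg.mono (Metric.closedBall_subset_ball (by simpa using hr1))
  have h := hd.circleIntegral_sub_inv_smul (Metric.mem_ball_self hr0)
  rw [circleIntegral] at h
  simp only [deriv_circleMap, sub_zero, smul_eq_mul] at h
  have hint : ∀ θ:ℝ, circleMap 0 r θ * Complex.I * ((circleMap 0 r θ)⁻¹ * g (circleMap 0 r θ))
      = Complex.I * g (circleMap 0 r θ) := by
    intro θ
    have hnz : circleMap 0 r θ ≠ 0 := by
      simp only [ne_eq, circleMap_eq_center_iff]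
      exact hr0.ne'
    field_simp
  simp_rw [hint, intervalIntegral.integral_const_mul] at h
  apply mul_left_cancel₀ Complex.I_ne_zero
  rw [h]; ring

/-- For an inner function `I` with `I(0) = 0`, `0 < λ < 1` and `c > 0`, the function
`f = c((1 + λI)/(1 - λI))²` is in `H¹` with `f(0) = c` and `‖f‖₁ = c(1 + 3λ²)/(1 - λ²)`;
equivalently `f(0)/‖f‖₁ = (1 - λ²)/(1 + 3λ²)`. -/
theorem hardyNorm1_of_inner_extremal (I : ℂ → ℂ) (hI : IsInnerFn I) (hI0 : I 0 = 0)
    (lam c : ℝ) (hlam : lam ∈ Set.Ioo (0:ℝ) 1) (hc : 0 < c) (f : ℂ → ℂ)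
    (hf : ∀ z, f z = (c : ℂ) * ((1 + (lam : ℂ) * I z) / (1 - (lam : ℂ) * I z)) ^ 2) :
    MemHardy1 f ∧ f 0 = (c : ℂ) ∧
      hardyNorm1 f = c * (1 + 3 * lam ^ 2) / (1 - lam ^ 2) ∧
      (f 0).re / hardyNorm1 f = (1 - lam ^ 2) / (1 + 3 * lam ^ 2) := by
  classical
  obtain ⟨hl0, hl1⟩ := hlam
  obtain ⟨hIdiff, hIbd, hIrad⟩ := hI
  have hπ : (0:ℝ) < π := Real.pi_pos
  have h2π : (0:ℝ) < 2 * π := by linarith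
  have hl2 : (0:ℝ) < 1 - lam ^ 2 := by nlinarith
  set A : ℝ := 2*c*(1+lam^2)/(1-lam^2) with hA
  have hcp : ∀ r θ : ℝ, circlePoint r θ = circleMap 0 r θ := fun r θ =>
    (circleMap_zero r θ).symm
  have hmem : ∀ {r : ℝ}, 0 < r → r < 1 → ∀ θ : ℝ, circlePoint r θ ∈ Metric.ball (0:ℂ) 1 := by
    intro r hr0 hr1 θ
    rw [hcp, mem_ball_zero_iff, norm_circleMap_zero, abs_of_pos hr0]
    exact hr1
  set g : ℂ → ℂ := fun z => (1 + (lam:ℂ) * I z) / (1 - (lam:ℂ) * I z) with hgdef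
  have hgd : DifferentiableOn ℂ g (Metric.ball (0:ℂ) 1) := by
    apply DifferentiableOn.div
    · exact (differentiableOn_const _).add ((differentiableOn_const _).mul hIdiff)
    · exact (differentiableOn_const _).sub ((differentiableOn_const _).mul hIdiff)
    · exact fun z hz => aux_ne hl1 hl0 (hIbd z hz)
  have hfeq : f = fun z => (c:ℂ) * (g z) ^ 2 := funext fun z => hf z
  have hfd : DifferentiableOn ℂ f (Metric.ball (0:ℂ) 1) := by
    rw [hfeq]; exact (hgd.pow 2).const_mul _
  have hgb : ∀ z ∈ Metric.ball (0:ℂ) 1, ‖g z‖ ≤ (1+lam)/(1-lam) := by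
    intro z hz
    have h1 : ‖1 + (lam:ℂ) * I z‖ ≤ 1 + lam := by
      calc ‖1 + (lam:ℂ) * I z‖ ≤ ‖1‖ + ‖(lam:ℂ) * I z‖ :=
            norm_add_le _ _
        _ ≤ 1 + lam := by
            simp only [norm_one, norm_mul, Complex.norm_real, Real.norm_eq_abs, abs_of_pos hl0]
            nlinarith [hIbd z hz]
    have h2 : 1 - lam ≤ ‖1 - (lam:ℂ) * I z‖ := by
      have := norm_sub_norm_le (1:ℂ) ((lam:ℂ) * I z)
      simp only [norm_one, norm_mul, Complex.norm_real, Real.norm_eq_abs,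
        abs_of_pos hl0] at this
      nlinarith [hIbd z hz, hl0]
    rw [hgdef]
    simp only [norm_div]
    exact div_le_div₀ (by linarith) h1 (by linarith) h2
  have hfb : ∀ z ∈ Metric.ball (0:ℂ) 1, ‖f z‖ ≤ c * ((1+lam)/(1-lam))^2 := by
    intro z hz
    rw [hfeq]
    simp only [norm_mul, norm_pow, Complex.norm_real, Real.norm_eq_abs, abs_of_pos hc]
    exact mul_le_mul_of_nonneg_left
      (pow_le_pow_left₀ (norm_nonneg _) (hgb z hz) 2) hc.le
  have hKont : ∀ (h : ℂ → ℂ), DifferentiableOn ℂ h (Metric.ball (0:ℂ) 1) →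
      ∀ {r : ℝ}, 0 < r → r < 1 → Continuous fun θ : ℝ => h (circlePoint r θ) := by
    intro h hh r hr0 hr1
    apply hh.continuousOn.comp_continuous
    · unfold circlePoint
      continuity
    · exact hmem hr0 hr1
  have hg0 : g 0 = 1 := by rw [hgdef]; simp [hI0]
  -- circle means of g
  have hgmean : ∀ {r : ℝ}, 0 < r → r < 1 →
      ∫ θ in (0:ℝ)..(2*π), g (circlePoint r θ) = 2 * (π:ℂ) := by
    intro r hr0 hr1
    simp_rw [hcp]
    rw [circle_mean hr0 hr1 hgd, hg0, mul_one]
  have hgre : ∀ {r : ℝ}, 0 < r → r < 1 →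
      ∫ θ in Ioc (0:ℝ) (2*π), (g (circlePoint r θ)).re = 2 * π := by
    intro r hr0 hr1
    have hint : IntegrableOn (fun θ : ℝ => g (circlePoint r θ)) (Ioc 0 (2*π)) volume :=
      (hKont g hgd hr0 hr1).integrableOn_Ioc
    have h1 := integral_re hint
    simp only [RCLike.re_to_complex] at h1
    rw [h1]
    have := hgmean hr0 hr1
    rw [intervalIntegral.integral_of_le h2π.le] at this
    rw [this]
    simp
  -- pointwise bound
  have hkey : ∀ {r : ℝ}, 0 < r → r < 1 → ∀ θ : ℝ,
      ‖f (circlePoint r θ)‖ ≤ A * (g (circlePoint r θ)).re - c := by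
    intro r hr0 hr1 θ
    rw [hf]
    exact key_ineq hl0 hl1 hc (hIbd _ (hmem hr0 hr1 θ))
  -- integrabilities at fixed radius
  have hintf : ∀ {r : ℝ}, 0 < r → r < 1 →
      IntegrableOn (fun θ : ℝ => ‖f (circlePoint r θ)‖) (Ioc 0 (2*π)) volume := by
    intro r hr0 hr1
    exact (continuous_norm.comp (hKont f hfd hr0 hr1)).integrableOn_Ioc
  have hintg : ∀ {r : ℝ}, 0 < r → r < 1 →
      IntegrableOn (fun θ : ℝ => A * (g (circlePoint r θ)).re - c) (Ioc 0 (2*π)) volume := by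
    intro r hr0 hr1
    have hcre : Continuous fun θ : ℝ => (g (circlePoint r θ)).re :=
      Complex.continuous_re.comp (hKont g hgd hr0 hr1)
    exact ((continuous_const.mul hcre).sub continuous_const).integrableOn_Ioc
  have hmean_eq : ∀ {r : ℝ}, 0 < r → r < 1 →
      hardyMean1 f r = (2*π)⁻¹ * ∫ θ in Ioc (0:ℝ) (2*π), ‖f (circlePoint r θ)‖ := by
    intro r hr0 hr1
    rw [hardyMean1, intervalIntegral.integral_of_le h2π.le]
  have hub : ∀ r ∈ Ioo (0:ℝ) 1, hardyMean1 f r ≤ A - c := by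
    intro r hr
    rw [hmean_eq hr.1 hr.2]
    have hmono : (∫ θ in Ioc (0:ℝ) (2*π), ‖f (circlePoint r θ)‖)
        ≤ ∫ θ in Ioc (0:ℝ) (2*π), (A * (g (circlePoint r θ)).re - c) :=
      setIntegral_mono_on (hintf hr.1 hr.2) (hintg hr.1 hr.2) measurableSet_Ioc
        (fun θ _ => hkey hr.1 hr.2 θ)
    have hrhs : (∫ θ in Ioc (0:ℝ) (2*π), (A * (g (circlePoint r θ)).re - c))
        = A * (2*π) - c * (2*π) := by
      have hcre : Continuous fun θ : ℝ => (g (circlePoint r θ)).re :=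
        Complex.continuous_re.comp (hKont g hgd hr.1 hr.2)
      rw [integral_sub (show IntegrableOn (fun θ => A * (g (circlePoint r θ)).re) (Ioc 0 (2*π)) volume from (continuous_const.mul hcre).integrableOn_Ioc)
          (continuous_const.integrableOn_Ioc)]
      rw [integral_const_mul, hgre hr.1 hr.2, setIntegral_const, Real.volume_real_Ioc_of_le h2π.le,
        sub_zero, smul_eq_mul]
      ring
    calc (2*π)⁻¹ * (∫ θ in Ioc (0:ℝ) (2*π), ‖f (circlePoint r θ)‖)
        ≤ (2*π)⁻¹ * (A * (2*π) - c * (2*π)) := by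
          exact mul_le_mul_of_nonneg_left (hrhs ▸ hmono) (by positivity)
      _ = A - c := by field_simp
  have hbdd : BddAbove (hardyMean1 f '' Set.Ioo 0 1) := by
    refine ⟨A - c, ?_⟩
    rintro x ⟨r, hr, rfl⟩
    exact hub r hr
  -- boundary values of I
  obtain ⟨W, hW⟩ : ∃ W : ℝ → ℂ, ∀ᵐ θ ∂(volume.restrict (Ioc (0:ℝ) (2*π))),
      ‖W θ‖ = 1 ∧ Filter.Tendsto (fun r : ℝ => I (circlePoint r θ))
        (nhdsWithin 1 (Set.Iio 1)) (nhds (W θ)) := by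
    refine ⟨fun θ => if h : ∃ w : ℂ, ‖w‖ = 1 ∧
        Filter.Tendsto (fun r : ℝ => I (circlePoint r θ)) (nhdsWithin 1 (Set.Iio 1)) (nhds w)
      then h.choose else 1, ?_⟩
    filter_upwards [hIrad] with θ hθ
    simp only [dif_pos hθ]
    exact hθ.choose_spec
  -- increasing sequence of radii
  set rs : ℕ → ℝ := fun n => 1 - ((n:ℝ)+2)⁻¹ with hrs
  have hrs0 : ∀ n, 0 < rs n := by
    intro n
    show (0:ℝ) < 1 - ((n:ℝ)+2)⁻¹
    have h1 : ((n:ℝ)+2)⁻¹ < 1 := by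
      apply inv_lt_one_of_one_lt₀
      have : (0:ℝ) ≤ (n:ℝ) := Nat.cast_nonneg n
      linarith
    linarith
  have hrs1 : ∀ n, rs n < 1 := by
    intro n
    show (1:ℝ) - ((n:ℝ)+2)⁻¹ < 1
    have : (0:ℝ) < ((n:ℝ)+2)⁻¹ := by positivity
    linarith
  have hrlim : Filter.Tendsto rs Filter.atTop (nhdsWithin 1 (Set.Iio 1)) := by
    apply tendsto_nhdsWithin_of_tendsto_nhds_of_eventually_within
    · have h2 : Filter.Tendsto (fun n : ℕ => (n:ℝ)+2) Filter.atTop Filter.atTop :=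
        Filter.tendsto_atTop_add_const_right _ 2 tendsto_natCast_atTop_atTop
      have hinv := h2.inv_tendsto_atTop
      have h3 : Filter.Tendsto rs Filter.atTop (nhds (1 - 0)) := by
        apply Filter.Tendsto.sub tendsto_const_nhds
        exact hinv
      simpa using h3
    · exact Filter.Eventually.of_forall fun n => hrs1 n
  -- dominated convergence
  set B : ℝ := |A| * ((1+lam)/(1-lam)) + c * ((1+lam)/(1-lam))^2 with hB
  have hF_meas : ∀ n, AEStronglyMeasurable (fun θ => A * (g (circlePoint (rs n) θ)).re
      - ‖f (circlePoint (rs n) θ)‖) (volume.restrict (Ioc (0:ℝ) (2*π))) := by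
    intro n
    have hcre : Continuous fun θ : ℝ => (g (circlePoint (rs n) θ)).re :=
      Complex.continuous_re.comp (hKont g hgd (hrs0 n) (hrs1 n))
    have hcab : Continuous fun θ : ℝ => ‖f (circlePoint (rs n) θ)‖ :=
      continuous_norm.comp (hKont f hfd (hrs0 n) (hrs1 n))
    exact ((continuous_const.mul hcre).sub hcab).aestronglyMeasurable
  have hB_int : Integrable (fun _ : ℝ => B) (volume.restrict (Ioc (0:ℝ) (2*π))) := by
    exact integrableOn_const (by rw [Real.volume_Ioc]; exact ENNReal.ofReal_ne_top)
  have hF_bound : ∀ n, ∀ᵐ θ ∂(volume.restrict (Ioc (0:ℝ) (2*π))),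
      ‖A * (g (circlePoint (rs n) θ)).re - ‖f (circlePoint (rs n) θ)‖‖ ≤ B := by
    intro n
    apply Filter.Eventually.of_forall
    intro θ
    have hzb := hmem (hrs0 n) (hrs1 n) θ
    have h1 : |(g (circlePoint (rs n) θ)).re| ≤ (1+lam)/(1-lam) :=
      le_trans (Complex.abs_re_le_norm _) (hgb _ hzb)
    have h2 := hfb _ hzb
    have h3 : (0:ℝ) ≤ ‖f (circlePoint (rs n) θ)‖ := norm_nonneg _
    rw [Real.norm_eq_abs]
    have h5 : |A * (g (circlePoint (rs n) θ)).re - ‖f (circlePoint (rs n) θ)‖|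
        ≤ |A| * |(g (circlePoint (rs n) θ)).re| + ‖f (circlePoint (rs n) θ)‖ := by
      calc |A * (g (circlePoint (rs n) θ)).re - ‖f (circlePoint (rs n) θ)‖|
          = |A * (g (circlePoint (rs n) θ)).re + -(‖f (circlePoint (rs n) θ)‖)| := by
            ring_nf
        _ ≤ |A * (g (circlePoint (rs n) θ)).re| + |-(‖f (circlePoint (rs n) θ)‖)| :=
            abs_add_le _ _
        _ = |A| * |(g (circlePoint (rs n) θ)).re| + ‖f (circlePoint (rs n) θ)‖ := by
            rw [abs_neg, abs_mul, abs_of_nonneg h3]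
    have h6 : |A| * |(g (circlePoint (rs n) θ)).re| ≤ |A| * ((1+lam)/(1-lam)) :=
      mul_le_mul_of_nonneg_left h1 (abs_nonneg A)
    rw [hB]
    linarith
  have hF_lim : ∀ᵐ θ ∂(volume.restrict (Ioc (0:ℝ) (2*π))),
      Filter.Tendsto (fun n => A * (g (circlePoint (rs n) θ)).re
        - ‖f (circlePoint (rs n) θ)‖) Filter.atTop (nhds c) := by
    filter_upwards [hW] with θ hθ
    obtain ⟨hW1, hW2⟩ := hθ
    have hIt : Filter.Tendsto (fun n => I (circlePoint (rs n) θ)) Filter.atTop (nhds (W θ)) :=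
      hW2.comp hrlim
    have hGt : Filter.Tendsto (fun n => g (circlePoint (rs n) θ)) Filter.atTop
        (nhds ((1 + (lam:ℂ) * W θ) / (1 - (lam:ℂ) * W θ))) := by
      apply Filter.Tendsto.div (tendsto_const_nhds.add (tendsto_const_nhds.mul hIt))
        (tendsto_const_nhds.sub (tendsto_const_nhds.mul hIt))
      exact aux_ne hl1 hl0 (le_of_eq hW1)
    have hre : Filter.Tendsto (fun n => (g (circlePoint (rs n) θ)).re) Filter.atTop
        (nhds ((1 + (lam:ℂ) * W θ) / (1 - (lam:ℂ) * W θ)).re) :=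
      (Complex.continuous_re.tendsto _).comp hGt
    have habs : Filter.Tendsto (fun n => ‖f (circlePoint (rs n) θ)‖) Filter.atTop
        (nhds (‖(c:ℂ) * ((1 + (lam:ℂ) * W θ) / (1 - (lam:ℂ) * W θ))^2‖)) := by
      have h6 : Filter.Tendsto (fun n => f (circlePoint (rs n) θ)) Filter.atTop
          (nhds ((c:ℂ) * ((1 + (lam:ℂ) * W θ) / (1 - (lam:ℂ) * W θ))^2)) := by
        rw [hfeq]
        exact tendsto_const_nhds.mul (hGt.pow 2)
      exact (continuous_norm.tendsto _).comp h6
    have hfin : A * ((1 + (lam:ℂ) * W θ) / (1 - (lam:ℂ) * W θ)).re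
        - ‖(c:ℂ) * ((1 + (lam:ℂ) * W θ) / (1 - (lam:ℂ) * W θ))^2‖ = c := by
      rw [key_eq hl0 hl1 hc hW1, hA]
      ring
    have := (hre.const_mul A).sub habs
    rwa [hfin] at this
  have hDCT := tendsto_integral_of_dominated_convergence (μ := volume.restrict (Ioc (0:ℝ) (2*π)))
    (F := fun n θ => A * (g (circlePoint (rs n) θ)).re - ‖f (circlePoint (rs n) θ)‖)
    (f := fun _ => c) (fun _ => B) hF_meas hB_int hF_bound hF_lim
  have hconst : (∫ _ in Ioc (0:ℝ) (2*π), c ∂volume) = 2*π*c := by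
    rw [setIntegral_const, Real.volume_real_Ioc_of_le h2π.le, sub_zero, smul_eq_mul]
  rw [hconst] at hDCT
  have hFsplit : ∀ n, (∫ θ in Ioc (0:ℝ) (2*π), (A * (g (circlePoint (rs n) θ)).re
      - ‖f (circlePoint (rs n) θ)‖)) = A * (2*π)
      - ∫ θ in Ioc (0:ℝ) (2*π), ‖f (circlePoint (rs n) θ)‖ := by
    intro n
    have hcre : Continuous fun θ : ℝ => (g (circlePoint (rs n) θ)).re :=
      Complex.continuous_re.comp (hKont g hgd (hrs0 n) (hrs1 n))
    rw [integral_sub (show IntegrableOn (fun θ => A * (g (circlePoint (rs n) θ)).re) (Ioc 0 (2*π)) volume from (continuous_const.mul hcre).integrableOn_Ioc) (hintf (hrs0 n) (hrs1 n))]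
    rw [integral_const_mul, hgre (hrs0 n) (hrs1 n)]
  have hS : Filter.Tendsto (fun n => ∫ θ in Ioc (0:ℝ) (2*π),
      ‖f (circlePoint (rs n) θ)‖) Filter.atTop (nhds (A*(2*π) - 2*π*c)) := by
    have h7 := Filter.Tendsto.sub (tendsto_const_nhds (x := A*(2*π))
      (f := Filter.atTop (α := ℕ))) hDCT
    have h8 : (fun n => A*(2*π) - ∫ θ in Ioc (0:ℝ) (2*π), (A * (g (circlePoint (rs n) θ)).re
        - ‖f (circlePoint (rs n) θ)‖))
        = fun n => ∫ θ in Ioc (0:ℝ) (2*π), ‖f (circlePoint (rs n) θ)‖ := by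
      funext n
      rw [hFsplit n]
      ring
    rwa [h8] at h7
  have hHM : Filter.Tendsto (fun n => hardyMean1 f (rs n)) Filter.atTop (nhds (A - c)) := by
    have h9 := hS.const_mul ((2*π)⁻¹)
    have h10 : (2*π)⁻¹ * (A*(2*π) - 2*π*c) = A - c := by
      field_simp
    rw [h10] at h9
    have h11 : (fun n => (2*π)⁻¹ * ∫ θ in Ioc (0:ℝ) (2*π),
        ‖f (circlePoint (rs n) θ)‖) = fun n => hardyMean1 f (rs n) := by
      funext n
      rw [hmean_eq (hrs0 n) (hrs1 n)]
    rwa [h11] at h9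
  have hnorm : hardyNorm1 f = A - c := by
    unfold hardyNorm1
    apply le_antisymm
    · apply csSup_le
      · exact ⟨hardyMean1 f (1/2), ⟨1/2, by norm_num, rfl⟩⟩
      · rintro x ⟨r, hr, rfl⟩
        exact hub r hr
    · exact le_of_tendsto hHM (Filter.Eventually.of_forall fun n =>
        le_csSup hbdd ⟨rs n, ⟨hrs0 n, hrs1 n⟩, rfl⟩)
  have hf0 : f 0 = (c:ℂ) := by
    rw [hf 0, hI0]
    norm_num
  have hval : A - c = c * (1 + 3 * lam ^ 2) / (1 - lam ^ 2) := by
    rw [hA]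
    field_simp
    ring
  refine ⟨⟨hfd, hbdd⟩, hf0, by rw [hnorm, hval], ?_⟩
  rw [hf0, hnorm, hval, Complex.ofReal_re]
  have h13 : (0:ℝ) < 1 + 3 * lam ^ 2 := by positivity
  field_simp
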